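/- For a subshift X, if every admissible word b admits an admissible word a with ba ∈ L(X) and b ∈ ω⁻_{|b|}(a), then X is λ-synchronizing: for every admissible b of length K there exists a ∈ S_K(X) with ba ∈ L(X). (Direction (iii) ⇒ (ii) via taking a ∈ S_K(X) ∩ Γ⁺(b).) -/

import Mathlib

/-- A subshift presented by its language: nonempty, factorial, and bi-extendable. -/
structure SubshiftLang (A : Type*) where
  L : List A → Prop
  nonempty : L []
  factorial : ∀ u v w : List A, L (u ++ v ++ w) → L v
  extendable : ∀ u : List A, L u → ∃ a b : A, L (a :: (u ++ [b]))

variable {A : Type*}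

/-- `v` is an `l`-synchronizing word: every length-`l` predecessor of `v`
lies in `ω⁻ₗ(v)`. -/
def SubshiftLang.Sync (X : SubshiftLang A) (l : ℕ) (v : List A) : Prop :=
  X.L v ∧ ∀ b : List A, b.length = l → X.L (b ++ v) →
    ∀ c : List A, X.L (v ++ c) → X.L (b ++ v ++ c)

/-- `X` is λ-synchronizing: every admissible word extends on the right to a
`k`-synchronizing word, for every `k`. -/
def SubshiftLang.LambdaSync (X : SubshiftLang A) : Prop :=
  ∀ w : List A, X.L w → ∀ k : ℕ, ∃ v : List A, X.Sync k v ∧ X.L (w ++ v)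

/-- `l`-past equivalence: `μ` and `ν` have the same length-`l` predecessors. -/
def SubshiftLang.PastEq (X : SubshiftLang A) (l : ℕ) (μ ν : List A) : Prop :=
  ∀ b : List A, b.length = l → (X.L (b ++ μ) ↔ X.L (b ++ ν))

/-- Lemma 2.1, (iii) ⇒ (ii): the ω⁻-extension property implies that X is
λ-synchronizing. -/
theorem stmt9 [Fintype A] (X : SubshiftLang A)
    (h : ∀ b : List A, X.L b → ∃ a : List A, X.L (b ++ a) ∧
        ∀ c : List A, X.L (a ++ c) → X.L (b ++ a ++ c)) :
    X.LambdaSync := by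
  intro w hw k
  -- the set of "bad" length-k predecessors of v
  set Bad : List A → Set (List A) := fun v =>
    {b | b.length = k ∧ X.L (b ++ v) ∧ ∃ c, X.L (v ++ c) ∧ ¬ X.L (b ++ v ++ c)} with hBad
  have hfin : ∀ v, (Bad v).Finite := by
    intro v
    exact (List.finite_length_eq A k).subset (fun b hb => hb.1)
  -- key claim by induction on the number of bad predecessors
  have key : ∀ n : ℕ, ∀ v : List A, X.L (w ++ v) →
      (∀ c, X.L (v ++ c) → X.L (w ++ v ++ c)) → (Bad v).ncard ≤ n →
      ∃ v' : List A, X.Sync k v' ∧ X.L (w ++ v') := by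
    intro n
    induction n with
    | zero =>
      intro v hv1 _ hcard
      have hempty : Bad v = ∅ := by
        have := (Set.ncard_eq_zero (hfin v)).mp (Nat.le_zero.mp hcard)
        exact this
      refine ⟨v, ⟨?_, ?_⟩, hv1⟩
      · have := X.factorial w v []
        simpa using this (by simpa using hv1)
      · intro b hb hbv c hvc
        by_contra hc
        have : b ∈ Bad v := ⟨hb, hbv, c, hvc, hc⟩
        simp [hempty] at this
    | succ n ih =>
      intro v hv1 hv2 hcard
      rcases Set.eq_empty_or_nonempty (Bad v) with hempty | ⟨b, hbmem⟩
      · refine ⟨v, ⟨?_, ?_⟩, hv1⟩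
        · have := X.factorial w v []
          simpa using this (by simpa using hv1)
        · intro b hb hbv c hvc
          by_contra hc
          have : b ∈ Bad v := ⟨hb, hbv, c, hvc, hc⟩
          simp [hempty] at this
      · obtain ⟨hb, hbv, c₀, hvc₀, hnc₀⟩ := hbmem
        obtain ⟨a, ha1, ha2⟩ := h (b ++ v) hbv
        -- new word v' = v ++ a
        have hva : X.L (v ++ a) := by
          have := X.factorial b (v ++ a) []
          simpa [List.append_assoc] using this (by simpa [List.append_assoc] using ha1)
        have hwv' : X.L (w ++ (v ++ a)) := by
          have := hv2 a hva
          simpa [List.append_assoc] using this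
        have hv2' : ∀ c, X.L ((v ++ a) ++ c) → X.L (w ++ (v ++ a) ++ c) := by
          intro c hc
          have := hv2 (a ++ c) (by simpa [List.append_assoc] using hc)
          simpa [List.append_assoc] using this
        -- b is synchronized against v ++ a
        have hbgood : ∀ c, X.L ((v ++ a) ++ c) → X.L (b ++ (v ++ a) ++ c) := by
          intro c hc
          have hac : X.L (a ++ c) := by
            have := X.factorial v (a ++ c) []
            simpa [List.append_assoc] using this (by simpa [List.append_assoc] using hc)
          have := ha2 c hac
          simpa [List.append_assoc] using this
        -- any good predecessor stays good
        have hsub : Bad (v ++ a) ⊆ Bad v \ {b} := by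
          intro b' hb'
          obtain ⟨hb'l, hb'v, c, hvc, hnc⟩ := hb'
          have hb'vshort : X.L (b' ++ v) := by
            have := X.factorial [] (b' ++ v) a
            simpa [List.append_assoc] using this (by simpa [List.append_assoc] using hb'v)
          constructor
          · refine ⟨hb'l, hb'vshort, a ++ c, by simpa [List.append_assoc] using hvc, ?_⟩
            intro hcon
            exact hnc (by simpa [List.append_assoc] using hcon)
          · intro hb'eq
            simp only [Set.mem_singleton_iff] at hb'eq
            subst hb'eq
            exact hnc (hbgood c hvc)
        have hcard' : (Bad (v ++ a)).ncard ≤ n := by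
          have h1 : (Bad (v ++ a)).ncard ≤ (Bad v \ {b}).ncard :=
            Set.ncard_le_ncard hsub ((hfin v).diff)
          have h2 : (Bad v \ {b}).ncard < (Bad v).ncard := by
            apply Set.ncard_lt_ncard _ (hfin v)
            constructor
            · exact Set.diff_subset
            · intro hsup
              have : b ∈ Bad v \ {b} := hsup ⟨hb, hbv, c₀, hvc₀, hnc₀⟩
              simp at this
          omega
        exact ih (v ++ a) hwv' hv2' hcard'
  -- start: apply h to w itself
  obtain ⟨v₀, hv₀1, hv₀2⟩ := h w hw
  exact key (Bad v₀).ncard v₀ hv₀1 (fun c hc => hv₀2 c hc) le_rfl
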